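/- Let T be a tree of height ω₁ that has a cofinal branch. Then ◊ implies ◊_T. Moreover, if T is in addition an ω₁-tree, then ◊ and ◊_T are equivalent. -/

import Mathlib

open Set

/-- The first uncountable ordinal `ω₁`. -/
noncomputable def omega1 : Ordinal := Ordinal.omega 1

section TreeDefs

variable {T : Type*} [PartialOrder T]

/-- In a tree, the set of strict predecessors of any node is linearly ordered. -/
def PredsChain (T : Type*) [PartialOrder T] : Prop :=
  ∀ t : T, IsChain (· ≤ ·) {s : T | s < t}

/-- `ht` is *the* height function of the tree: it is strictly monotone on comparable pairs and
the heights of the strict predecessors of `t` are exactly the ordinals below `ht t`; together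
with `PredsChain` this says that the set `t↓` of strict predecessors of `t` is well-ordered
with order type `ht t`. -/
def IsHeightFun (ht : T → Ordinal) : Prop :=
  (∀ s t : T, s < t → ht s < ht t) ∧
  ∀ t : T, ∀ o : Ordinal, o < ht t → ∃ s : T, s < t ∧ ht s = o

/-- The tree has height `ω₁`: every node has height `< ω₁` and every countable ordinal is the
height of some node. -/
def HeightOmega1 (ht : T → Ordinal) : Prop :=
  (∀ t : T, ht t < omega1) ∧ ∀ o : Ordinal, o < omega1 → ∃ t : T, ht t = o

/-- All levels of the tree are countable. -/
def CountableLevels (ht : T → Ordinal) : Prop :=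
  ∀ o : Ordinal, {t : T | ht t = o}.Countable

/-- A tree of height `ω₁` is well-pruned if every node has successors in all later levels. -/
def WellPruned (ht : T → Ordinal) : Prop :=
  ∀ o o' : Ordinal, o < o' → o' < omega1 →
    ∀ s : T, ht s = o → ∃ t : T, s < t ∧ ht t = o'

/-- A special subset of a tree: a union of countably many antichains. -/
def IsSpecialSet (U : Set T) : Prop :=
  ∃ A : ℕ → Set T, (∀ n : ℕ, IsAntichain (· ≤ ·) (A n)) ∧ U ⊆ ⋃ n, A n

/-- Membership in the ideal `NS^T`: there is a regressive map on `B` all of whose fibers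
are special. -/
def InNS [OrderBot T] (B : Set T) : Prop :=
  ∃ f : T → T, (∀ t ∈ B, t ≠ ⊥ → f t < t) ∧
    ∀ t : T, IsSpecialSet {s : T | s ∈ B ∧ f s = t}

/-- The diamond principle `◊_T` for a tree `T`. -/
def DiamondTree (T : Type*) [PartialOrder T] [OrderBot T] : Prop :=
  ∃ D : T → Set T, (∀ t : T, D t ⊆ Set.Iio t) ∧
    ∀ X : Set T, ¬ InNS {t : T | X ∩ Set.Iio t = D t}

end TreeDefs

/-- Club subsets of `ω₁`: closed and unbounded in `ω₁`. -/
def IsClubIn (C : Set Ordinal) : Prop :=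
  C ⊆ Set.Iio omega1 ∧
  (∀ o : Ordinal, o < omega1 → ∃ b ∈ C, o < b) ∧
  ∀ o : Ordinal, o < omega1 → (C ∩ Set.Iio o).Nonempty →
    IsLUB (C ∩ Set.Iio o) o → o ∈ C

/-- Stationary subsets of `ω₁`: sets meeting every club. -/
def IsStationaryIn (S : Set Ordinal) : Prop :=
  ∀ C : Set Ordinal, IsClubIn C → (S ∩ C).Nonempty

/-- The diamond principle `◊(S)` for `S ⊆ ω₁`;  `◊` is `DiamondOn (Set.Iio omega1)`. -/
def DiamondOn (S : Set Ordinal) : Prop :=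
  ∃ D : Ordinal → Set Ordinal, (∀ o ∈ S, D o ⊆ Set.Iio o) ∧
    ∀ X : Set Ordinal, X ⊆ Set.Iio omega1 →
      IsStationaryIn {o ∈ S | X ∩ Set.Iio o = D o}

section OrdinalLemmas

lemma omega1_eq_ord : omega1 = (Cardinal.aleph 1).ord := (Cardinal.ord_aleph 1).symm

lemma omega1_pos : (0 : Ordinal) < omega1 := Ordinal.omega_pos 1

lemma omega1_isLimit : Order.IsSuccLimit omega1 := by
  rw [omega1_eq_ord]; exact Cardinal.isSuccLimit_ord (Cardinal.aleph0_le_aleph 1)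

lemma card_le_aleph0_of_lt_omega1 {o : Ordinal} (h : o < omega1) : o.card ≤ Cardinal.aleph0 := by
  have h1 : o.card < Cardinal.aleph 1 := Cardinal.lt_ord.1 (by rwa [← omega1_eq_ord])
  rwa [← Cardinal.succ_aleph0, Order.lt_succ_iff] at h1

lemma lt_omega1_of_card_le {o : Ordinal} (h : o.card ≤ Cardinal.aleph0) : o < omega1 := by
  rw [omega1_eq_ord, Cardinal.lt_ord]
  exact h.trans_lt Cardinal.aleph0_lt_aleph_one

lemma succ_lt_omega1 {o : Ordinal} (h : o < omega1) : o + 1 < omega1 := by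
  rw [Ordinal.add_one_eq_succ]; exact omega1_isLimit.succ_lt h

lemma Iio_countable {o : Ordinal} (h : o < omega1) : (Set.Iio o).Countable := by
  rw [Cardinal.countable_iff_lt_aleph_one, Ordinal.mk_Iio_ordinal]
  calc Cardinal.lift o.card ≤ Cardinal.lift Cardinal.aleph0 :=
        Cardinal.lift_le.2 (card_le_aleph0_of_lt_omega1 h)
    _ = Cardinal.aleph0 := Cardinal.lift_aleph0
    _ < _ := Cardinal.aleph0_lt_aleph_one

lemma bddAbove_of_lt_omega1 {Z : Set Ordinal} (h : ∀ z ∈ Z, z < omega1) : BddAbove Z :=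
  ⟨omega1, fun z hz => (h z hz).le⟩

lemma sSup_lt_omega1 {Z : Set Ordinal} (hZ : Z.Countable) (h : ∀ z ∈ Z, z < omega1) :
    sSup Z < omega1 := by
  rcases Z.eq_empty_or_nonempty with rfl | hne
  · rw [csSup_empty]; exact omega1_pos
  obtain ⟨e, he⟩ := hZ.exists_eq_range hne
  subst he
  have : sSup (Set.range e) = ⨆ n, e n := rfl
  rw [this]
  exact Ordinal.iSup_lt_omega_one
    (fun n => by exact h _ ⟨n, rfl⟩)

lemma iSup_nat_lt_omega1 {e : ℕ → Ordinal} (h : ∀ n, e n < omega1) : (⨆ n, e n) < omega1 := by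
  have : (⨆ n, e n) = sSup (Set.range e) := rfl
  rw [this]
  exact sSup_lt_omega1 (Set.countable_range e) (by rintro z ⟨n, rfl⟩; exact h n)

/-- The club of closure points of a function `h`. -/
def closurePts (h : Ordinal → Ordinal) : Set Ordinal :=
  {o | o < omega1 ∧ 0 < o ∧ ∀ b < o, h b < o}

lemma isClubIn_closurePts (h : Ordinal → Ordinal) (hh : ∀ o, o < omega1 → h o < omega1) :
    IsClubIn (closurePts h) := by
  refine ⟨fun o ho => ho.1, ?_, ?_⟩
  · intro o ho
    set a : ℕ → Ordinal := fun k =>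
      Nat.rec (o + 1) (fun _ x => max (x + 1) (sSup (h '' Set.Iio x) + 1)) k with ha
    have ha0 : a 0 = o + 1 := rfl
    have haS : ∀ k, a (k + 1) = max (a k + 1) (sSup (h '' Set.Iio (a k)) + 1) := fun k => rfl
    have halt : ∀ k, a k < omega1 := by
      intro k
      induction k with
      | zero => exact succ_lt_omega1 ho
      | succ k ih =>
        rw [haS]
        apply max_lt (succ_lt_omega1 ih)
        apply succ_lt_omega1
        apply sSup_lt_omega1 ((Iio_countable ih).image h)
        rintro z ⟨b, hb, rfl⟩
        exact hh b (hb.trans ih)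
    have hmono : ∀ k, a k < a (k + 1) := by
      intro k; rw [haS]
      exact lt_of_lt_of_le (lt_add_one _) (le_max_left _ _)
    have hbdd : BddAbove (Set.range a) :=
      bddAbove_of_lt_omega1 (by rintro z ⟨n, rfl⟩; exact halt n)
    refine ⟨⨆ k, a k, ⟨iSup_nat_lt_omega1 halt, ?_, ?_⟩, ?_⟩
    · have : a 0 ≤ ⨆ k, a k := le_ciSup hbdd 0
      rw [ha0] at this
      exact lt_of_lt_of_le (lt_of_le_of_lt (zero_le (a := o)) (lt_add_one o)) this
    · intro b hb
      obtain ⟨k, hk⟩ := (lt_ciSup_iff hbdd).1 hb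
      have h1 : h b ≤ sSup (h '' Set.Iio (a k)) :=
        le_csSup (bddAbove_of_lt_omega1 (by
          rintro z ⟨c, hc, rfl⟩; exact hh c (hc.trans (halt k)))) ⟨b, hk, rfl⟩
      have h2 : sSup (h '' Set.Iio (a k)) + 1 ≤ a (k + 1) := by
        rw [haS]; exact le_max_right _ _
      calc h b < sSup (h '' Set.Iio (a k)) + 1 := lt_of_le_of_lt h1 (lt_add_one _)
        _ ≤ a (k + 1) := h2
        _ ≤ ⨆ k, a k := le_ciSup hbdd (k + 1)
    · have : a 0 ≤ ⨆ k, a k := le_ciSup hbdd 0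
      rw [ha0] at this
      exact lt_of_lt_of_le (lt_add_one o) this
  · intro o ho hne hlub
    obtain ⟨c, hcC, hco⟩ := hne
    refine ⟨ho, lt_trans hcC.2.1 hco, ?_⟩
    intro b hb
    have : ∃ c ∈ closurePts h ∩ Set.Iio o, b < c := by
      by_contra hcon
      push_neg at hcon
      have : o ≤ b := hlub.2 (fun x hx => hcon x hx)
      exact absurd hb (not_lt.2 this)
    obtain ⟨c, ⟨hcC, hco⟩, hbc⟩ := this
    exact lt_trans (hcC.2.2 b hbc) hco

lemma isClubIn_iInter {C : ℕ → Set Ordinal} (hC : ∀ n, IsClubIn (C n)) :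
    IsClubIn (⋂ n, C n) := by
  refine ⟨fun o ho => (hC 0).1 (Set.mem_iInter.1 ho 0), ?_, ?_⟩
  · intro o ho
    have H : ∀ (n : ℕ) (x : Ordinal), x < omega1 → ∃ b, b ∈ C n ∧ x < b ∧ b < omega1 := by
      intro n x hx
      obtain ⟨b, hb, hxb⟩ := (hC n).2.1 x hx
      exact ⟨b, hb, hxb, (hC n).1 hb⟩
    set g : Ordinal → ℕ → Ordinal := fun x n =>
      if hx : x < omega1 then (H n x hx).choose else 0 with hg
    have hgspec : ∀ (x : Ordinal) (n : ℕ), x < omega1 →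
        g x n ∈ C n ∧ x < g x n ∧ g x n < omega1 := by
      intro x n hx
      rw [hg]; simp only [hx, dif_pos]
      exact (H n x hx).choose_spec
    set a : ℕ → Ordinal := fun k => Nat.rec o (fun k x => g x k.unpair.1) k with haa
    have ha0 : a 0 = o := rfl
    have haS : ∀ k, a (k + 1) = g (a k) k.unpair.1 := fun k => rfl
    have halt : ∀ k, a k < omega1 := by
      intro k
      induction k with
      | zero => exact ho
      | succ k ih => rw [haS]; exact (hgspec (a k) k.unpair.1 ih).2.2
    have hmono : ∀ k, a k < a (k + 1) := by
      intro k; rw [haS]; exact (hgspec (a k) k.unpair.1 (halt k)).2.1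
    have hmem : ∀ k, a (k + 1) ∈ C k.unpair.1 := by
      intro k; rw [haS]; exact (hgspec (a k) k.unpair.1 (halt k)).1
    have hsm : StrictMono a := strictMono_nat_of_lt_succ hmono
    have hbdd : BddAbove (Set.range a) :=
      bddAbove_of_lt_omega1 (by rintro z ⟨n, rfl⟩; exact halt n)
    have hlt : ∀ k, a k < ⨆ j, a j :=
      fun k => lt_of_lt_of_le (hmono k) (le_ciSup hbdd (k + 1))
    refine ⟨⨆ j, a j, Set.mem_iInter.2 ?_, by rw [← ha0]; exact hlt 0⟩
    intro n
    apply (hC n).2.2 _ (iSup_nat_lt_omega1 halt)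
    · refine ⟨a (Nat.pair n 0 + 1), ?_, Set.mem_Iio.2 (hlt (Nat.pair n 0 + 1))⟩
      have := hmem (Nat.pair n 0)
      rwa [Nat.unpair_pair] at this
    · constructor
      · intro x hx; exact hx.2.le
      · intro x hx
        have hax : ∀ k, a k ≤ x := by
          intro k
          have h1 : a k ≤ a (Nat.pair n k) := hsm.monotone (Nat.right_le_pair n k)
          have h2 : a (Nat.pair n k + 1) ∈ C n ∩ Set.Iio (⨆ j, a j) := by
            refine ⟨?_, Set.mem_Iio.2 (hlt (Nat.pair n k + 1))⟩
            have := hmem (Nat.pair n k)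
            rwa [Nat.unpair_pair] at this
          exact le_trans (le_trans h1 (hmono (Nat.pair n k)).le) (hx h2)
        exact ciSup_le hax
  · intro o ho hne hlub
    refine Set.mem_iInter.2 fun n => ?_
    apply (hC n).2.2 o ho
    · obtain ⟨c, hc1, hc2⟩ := hne
      exact ⟨c, Set.mem_iInter.1 hc1 n, hc2⟩
    · constructor
      · intro x hx; exact hx.2.le
      · intro x hx
        exact hlub.2 fun y hy => hx ⟨Set.mem_iInter.1 hy.1 n, hy.2⟩

lemma omega_mul_add_omega_lt_omega1 {ξ : Ordinal} (h : ξ < omega1) :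
    Ordinal.omega0 * ξ + Ordinal.omega0 < omega1 := by
  apply lt_omega1_of_card_le
  rw [Ordinal.card_add, Ordinal.card_mul, Ordinal.card_omega0]
  have h1 : Cardinal.aleph0 * ξ.card ≤ Cardinal.aleph0 := by
    calc Cardinal.aleph0 * ξ.card ≤ Cardinal.aleph0 * Cardinal.aleph0 :=
          mul_le_mul_right (card_le_aleph0_of_lt_omega1 h) _
      _ = Cardinal.aleph0 := Cardinal.aleph0_mul_aleph0
  calc Cardinal.aleph0 * ξ.card + Cardinal.aleph0
      ≤ Cardinal.aleph0 + Cardinal.aleph0 := add_le_add_left h1 _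
    _ = Cardinal.aleph0 := Cardinal.aleph0_add_aleph0

lemma code_inj {ξ ζ : Ordinal} {n m : ℕ}
    (h : Ordinal.omega0 * ξ + (n : Ordinal) = Ordinal.omega0 * ζ + (m : Ordinal)) :
    ξ = ζ ∧ n = m := by
  have key : ∀ {a b : Ordinal} {p q : ℕ}, a < b →
      Ordinal.omega0 * a + (p : Ordinal) ≠ Ordinal.omega0 * b + (q : Ordinal) := by
    intro a b p q hab
    apply ne_of_lt
    calc Ordinal.omega0 * a + (p : Ordinal) < Ordinal.omega0 * a + Ordinal.omega0 :=
          add_lt_add_right (Ordinal.nat_lt_omega0 p) _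
      _ = Ordinal.omega0 * (Order.succ a) := (Ordinal.mul_succ _ _).symm
      _ ≤ Ordinal.omega0 * b := mul_le_mul_right (Order.succ_le_of_lt hab) _
      _ ≤ Ordinal.omega0 * b + (q : Ordinal) := le_self_add
  have hξζ : ξ = ζ := by
    rcases lt_trichotomy ξ ζ with hlt | heq | hlt
    · exact absurd h (key hlt)
    · exact heq
    · exact absurd h.symm (key hlt)
  subst hξζ
  have : (n : Ordinal) = (m : Ordinal) := (add_right_inj _).1 h
  exact ⟨rfl, Nat.cast_injective this⟩

end OrdinalLemmas


section TreeLemmas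

variable {T : Type*} [PartialOrder T]

lemma IsSpecialSet.mono {U V : Set T} (h : IsSpecialSet V) (hUV : U ⊆ V) : IsSpecialSet U := by
  obtain ⟨A, hA, hV⟩ := h
  exact ⟨A, hA, hUV.trans hV⟩

lemma isSpecialSet_of_countable {U : Set T} (h : U.Countable) : IsSpecialSet U := by
  rcases U.eq_empty_or_nonempty with rfl | hne
  · exact ⟨fun _ => ∅, fun n => Set.subsingleton_empty.isAntichain _, by simp⟩
  obtain ⟨e, he⟩ := h.exists_eq_range hne
  refine ⟨fun n => {e n}, fun n => ?_, ?_⟩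
  · intro x hx y hy hxy
    simp only [Set.mem_singleton_iff] at hx hy
    exact absurd (hx.trans hy.symm) hxy
  · rw [he]
    rintro x ⟨n, rfl⟩
    exact Set.mem_iUnion.2 ⟨n, rfl⟩

section WithBot
variable [OrderBot T] {ht : T → Ordinal}

lemma InNS.mono {B B' : Set T} (h : InNS B) (hsub : B' ⊆ B) : InNS B' := by
  obtain ⟨f, hreg, hfib⟩ := h
  refine ⟨f, fun t htB => hreg t (hsub htB), fun t => ?_⟩
  exact (hfib t).mono fun s hs => ⟨hsub hs.1, hs.2⟩

lemma ht_bot_eq_zero (hht : IsHeightFun ht) : ht ⊥ = 0 := by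
  by_contra h
  obtain ⟨s, hs, -⟩ := hht.2 ⊥ 0 (pos_iff_ne_zero.2 h)
  exact not_lt_bot hs

lemma eq_bot_of_ht_eq_zero (hht : IsHeightFun ht) {t : T} (h : ht t = 0) : t = ⊥ := by
  by_contra hne
  have : (⊥ : T) < t := bot_le.lt_of_ne (Ne.symm hne)
  have := hht.1 ⊥ t this
  rw [h] at this
  exact not_lt_zero this

lemma pred_unique (hchain : PredsChain T) (hht : IsHeightFun ht) {s s' t : T}
    (hs : s < t) (hs' : s' < t) (he : ht s = ht s') : s = s' := by
  by_contra hne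
  rcases hchain t hs hs' hne with hle | hle
  · exact absurd he (ne_of_lt (hht.1 s s' (hle.lt_of_ne hne)))
  · exact absurd he.symm (ne_of_lt (hht.1 s' s (hle.lt_of_ne (Ne.symm hne))))

lemma countable_levels_lt (hlev : CountableLevels ht) {δ : Ordinal} (hδ : δ < omega1) :
    {t : T | ht t < δ}.Countable := by
  have : {t : T | ht t < δ} = ⋃ o ∈ Set.Iio δ, {t | ht t = o} := by
    ext x; simp [Set.mem_iUnion]
  rw [this]
  exact Set.Countable.biUnion (Iio_countable hδ) fun o _ => hlev o

/-- If the levels met by a set avoid a club, the set is in `NS^T` (needs countable levels). -/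
lemma inNS_of_levels_notin_club (hchain : PredsChain T) (hht : IsHeightFun ht)
    (hΩ : HeightOmega1 ht) (hlev : CountableLevels ht) {C : Set Ordinal} (hC : IsClubIn C) :
    InNS {t : T | ht t ∉ C} := by
  classical
  have hCne : C.Nonempty := by
    obtain ⟨b, hb, -⟩ := hC.2.1 0 omega1_pos
    exact ⟨b, hb⟩
  -- (a) key fact about suprema of club initial parts
  have keyA : ∀ o : Ordinal, o < omega1 → o ∉ C → (C ∩ Set.Iio o).Nonempty →
      sSup (C ∩ Set.Iio o) ∈ C ∧ sSup (C ∩ Set.Iio o) < o := by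
    intro o ho hoC hne
    set γ := sSup (C ∩ Set.Iio o) with hγ
    have hbdd : BddAbove (C ∩ Set.Iio o) := ⟨o, fun x hx => hx.2.le⟩
    have hlub : IsLUB (C ∩ Set.Iio o) γ := isLUB_csSup hne hbdd
    have hγo : γ ≤ o := csSup_le hne fun x hx => hx.2.le
    have hγC : γ ∈ C := by
      by_cases hmem : γ ∈ C
      · exact hmem
      · exfalso
        have hEq : C ∩ Set.Iio o = C ∩ Set.Iio γ := by
          apply Set.eq_of_subset_of_subset
          · intro x hx
            refine ⟨hx.1, ?_⟩
            have hxγ : x ≤ γ := le_csSup hbdd hx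
            exact lt_of_le_of_ne hxγ (fun hc => hmem (hc ▸ hx.1))
          · intro x hx
            exact ⟨hx.1, lt_of_lt_of_le hx.2 hγo⟩
        apply hmem
        apply hC.2.2 γ (lt_of_le_of_lt hγo ho)
        · rw [← hEq]; exact hne
        · rw [← hEq]; exact hlub
    exact ⟨hγC, lt_of_le_of_ne hγo (fun hc => hoC (hc ▸ hγC))⟩
  set f : T → T := fun t =>
    if h : ∃ s, s < t ∧ ht s = sSup (C ∩ Set.Iio (ht t)) then h.choose else ⊥ with hf
  -- existence of the witness for any non-bot t off the club
  have hex : ∀ t : T, t ≠ ⊥ → ht t ∉ C → ∃ s, s < t ∧ ht s = sSup (C ∩ Set.Iio (ht t)) := by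
    intro t htbot htC
    rcases (C ∩ Set.Iio (ht t)).eq_empty_or_nonempty with hem | hne
    · rw [hem, csSup_empty]
      have : ht t ≠ 0 := fun h0 => htbot (eq_bot_of_ht_eq_zero hht h0)
      exact hht.2 t ⊥ (pos_iff_ne_zero.2 this)
    · obtain ⟨-, hlt⟩ := keyA (ht t) (hΩ.1 t) htC hne
      exact hht.2 t _ hlt
  refine ⟨f, ?_, ?_⟩
  · intro t htB htbot
    obtain h := hex t htbot htB
    rw [hf]
    simp only [h, dif_pos]
    exact h.choose_spec.1
  · intro u
    -- bound on the fiber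
    have hCinf : sInf C ∈ C := csInf_mem hCne
    set nxt : Ordinal := sInf {c | c ∈ C ∧ ht u < c} with hnxt
    have hnxtne : {c | c ∈ C ∧ ht u < c}.Nonempty := by
      obtain ⟨b, hb, hub⟩ := hC.2.1 (ht u) (hΩ.1 u)
      exact ⟨b, hb, hub⟩
    have hnxtmem : nxt ∈ C ∧ ht u < nxt := csInf_mem hnxtne
    set κ : Ordinal := max (sInf C + 1) nxt with hκ
    have hκlt : κ < omega1 := by
      apply max_lt (succ_lt_omega1 (hC.1 hCinf)) (hC.1 hnxtmem.1)
    apply (isSpecialSet_of_countable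
      (((countable_levels_lt hlev hκlt).union (Set.countable_singleton ⊥)))).mono
    rintro s ⟨hsB, hsf⟩
    by_cases hsbot : s = ⊥
    · exact Or.inr hsbot
    left
    show ht s < κ
    have hexs := hex s hsbot hsB
    have hfs : f s = hexs.choose := by rw [hf]; simp only [hexs, dif_pos]
    have hspec := hexs.choose_spec
    rw [hfs] at hsf
    have hhtu : ht u = sSup (C ∩ Set.Iio (ht s)) := by rw [← hsf]; exact hspec.2
    rcases (C ∩ Set.Iio (ht s)).eq_empty_or_nonempty with hem | hne
    · -- s below the least club point
      have : ht s ≤ sInf C := by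
        by_contra hcon
        push_neg at hcon
        exact absurd hem (Set.nonempty_iff_ne_empty.1 ⟨sInf C, hCinf, hcon⟩)
      calc ht s ≤ sInf C := this
        _ < sInf C + 1 := lt_add_one _
        _ ≤ κ := le_max_left _ _
    · obtain ⟨hγC, hγlt⟩ := keyA (ht s) (hΩ.1 s) hsB hne
      rw [← hhtu] at hγC hγlt
      have : ht s < nxt := by
        rcases lt_trichotomy nxt (ht s) with hlt | heq | hgt
        · exfalso
          have hmem : nxt ∈ C ∩ Set.Iio (ht s) := ⟨hnxtmem.1, hlt⟩
          have : nxt ≤ sSup (C ∩ Set.Iio (ht s)) := le_csSup ⟨ht s, fun x hx => hx.2.le⟩ hmem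
          rw [← hhtu] at this
          exact absurd this (not_le.2 hnxtmem.2)
        · exact absurd (heq ▸ hnxtmem.1) hsB
        · exact hgt
      exact lt_of_lt_of_le this (le_max_right _ _)

end WithBot
end TreeLemmas


section UniverseTransfer

lemma lift_omega1.{u, v} : Ordinal.lift.{v, u} omega1.{u} = omega1.{max u v} := by
  rw [omega1_eq_ord, omega1_eq_ord, Cardinal.lift_ord, Cardinal.lift_aleph]
  norm_num

/-- Preimages of clubs under `lift` are clubs. -/
lemma isClubIn_preimage_lift.{u, v} {C' : Set Ordinal.{max u v}} (h : IsClubIn C') :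
    IsClubIn (Ordinal.lift.{v, u} ⁻¹' C') := by
  refine ⟨?_, ?_, ?_⟩
  · intro o ho
    have h2 : Ordinal.lift.{v,u} o < Ordinal.lift.{v,u} omega1.{u} := by
      rw [lift_omega1.{u, v}]; exact h.1 ho
    exact Ordinal.lift_lt.1 h2
  · intro o ho
    obtain ⟨b', hb', hob'⟩ := h.2.1 (Ordinal.lift.{v, u} o)
      (by rw [← lift_omega1.{u, v}, Ordinal.lift_lt]; exact ho)
    have hble : b' ≤ Ordinal.lift.{v,u} omega1.{u} := by
      rw [lift_omega1.{u, v}]; exact (h.1 hb').le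
    obtain ⟨b, rfl⟩ := Ordinal.mem_range_lift_of_le hble
    exact ⟨b, hb', Ordinal.lift_lt.1 hob'⟩
  · intro o ho hne hlub
    show Ordinal.lift.{v,u} o ∈ C'
    have hmemlift : ∀ x' ∈ C' ∩ Set.Iio (Ordinal.lift.{v,u} o),
        ∃ x, x ∈ Ordinal.lift.{v,u} ⁻¹' C' ∩ Set.Iio o ∧ Ordinal.lift.{v,u} x = x' := by
      rintro x' ⟨hx'C, hx'o⟩
      obtain ⟨x, rfl⟩ := Ordinal.mem_range_lift_of_le hx'o.le
      exact ⟨x, ⟨hx'C, Ordinal.lift_lt.1 hx'o⟩, rfl⟩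
    apply h.2.2 _ (by rw [← lift_omega1.{u, v}, Ordinal.lift_lt]; exact ho)
    · obtain ⟨c, hc⟩ := hne
      exact ⟨Ordinal.lift.{v,u} c, hc.1, Ordinal.lift_lt.2 hc.2⟩
    · constructor
      · intro x' hx'
        exact hx'.2.le
      · intro x' hx'
        by_contra hcon
        push_neg at hcon
        obtain ⟨x, rfl⟩ := Ordinal.mem_range_lift_of_le hcon.le
        have hub : x ∈ upperBounds (Ordinal.lift.{v,u} ⁻¹' C' ∩ Set.Iio o) := by
          intro c hc
          have : Ordinal.lift.{v,u} c ≤ Ordinal.lift.{v,u} x :=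
            hx' ⟨hc.1, Ordinal.lift_lt.2 hc.2⟩
          exact Ordinal.lift_le.1 this
        exact absurd (Ordinal.lift_le.2 (hlub.2 hub)) (not_le.2 hcon)

/-- Images of clubs under `lift` are clubs. -/
lemma isClubIn_image_lift.{u, v} {C : Set Ordinal.{u}} (h : IsClubIn C) :
    IsClubIn (Ordinal.lift.{v, u} '' C) := by
  refine ⟨?_, ?_, ?_⟩
  · rintro o' ⟨o, ho, rfl⟩
    rw [Set.mem_Iio, ← lift_omega1.{u, v}, Ordinal.lift_lt]
    exact h.1 ho
  · intro o' ho'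
    rw [← lift_omega1.{u, v}] at ho'
    obtain ⟨o, rfl⟩ := Ordinal.mem_range_lift_of_le ho'.le
    obtain ⟨b, hb, hob⟩ := h.2.1 o (Ordinal.lift_lt.1 ho')
    exact ⟨Ordinal.lift.{v,u} b, ⟨b, hb, rfl⟩, Ordinal.lift_lt.2 hob⟩
  · intro o' ho' hne hlub
    rw [← lift_omega1.{u, v}] at ho'
    obtain ⟨o, rfl⟩ := Ordinal.mem_range_lift_of_le ho'.le
    have ho : o < omega1.{u} := Ordinal.lift_lt.1 ho'
    refine ⟨o, ?_, rfl⟩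
    apply h.2.2 o ho
    · obtain ⟨c', hc'⟩ := hne
      obtain ⟨c, hcC, rfl⟩ := hc'.1
      exact ⟨c, hcC, Ordinal.lift_lt.1 hc'.2⟩
    · constructor
      · intro x hx; exact hx.2.le
      · intro x hx
        have : Ordinal.lift.{v,u} o ≤ Ordinal.lift.{v,u} x := by
          apply hlub.2
          rintro c' ⟨⟨c, hcC, rfl⟩, hc'⟩
          exact Ordinal.lift_le.2 (hx ⟨hcC, Ordinal.lift_lt.1 hc'⟩)
        exact Ordinal.lift_le.1 this

lemma diamondOn_lift_up.{u, v} (h : DiamondOn.{u} (Set.Iio omega1.{u})) :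
    DiamondOn.{max u v} (Set.Iio omega1.{max u v}) := by
  classical
  obtain ⟨D, hD1, hD2⟩ := h
  set dn : Ordinal.{max u v} → Ordinal.{u} := fun o =>
    if h : ∃ a, Ordinal.lift.{v,u} a = o then h.choose else 0 with hdn
  have hdnspec : ∀ o : Ordinal.{max u v}, o < omega1.{max u v} →
      Ordinal.lift.{v,u} (dn o) = o := by
    intro o ho
    have : o ≤ Ordinal.lift.{v,u} omega1.{u} := by rw [lift_omega1.{u, v}]; exact ho.le
    obtain hex : ∃ a, Ordinal.lift.{v,u} a = o := Ordinal.mem_range_lift_of_le this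
    rw [hdn]; simp only [hex, dif_pos]
    exact hex.choose_spec
  refine ⟨fun o => Ordinal.lift.{v,u} '' (D (dn o)), ?_, ?_⟩
  · rintro o ho x ⟨y, hy, rfl⟩
    have h1 := hdnspec o ho
    have hdlt : dn o < omega1.{u} := by
      rw [← Ordinal.lift_lt.{v,u}, h1, lift_omega1.{u, v}]; exact ho
    have := hD1 (dn o) hdlt hy
    rw [Set.mem_Iio, ← h1, Ordinal.lift_lt]
    exact this
  · intro X' hX' C' hC'
    set X : Set Ordinal.{u} := Ordinal.lift.{v,u} ⁻¹' X' with hX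
    have hXsub : X ⊆ Set.Iio omega1.{u} := by
      intro x hx
      have := hX' hx
      rwa [Set.mem_Iio, ← lift_omega1.{u, v}, Ordinal.lift_lt] at this
    obtain ⟨α, ⟨hα1, hα2⟩, hαC⟩ := hD2 X hXsub _ (isClubIn_preimage_lift hC')
    refine ⟨Ordinal.lift.{v,u} α, ⟨?_, ?_⟩, hαC⟩
    · rw [Set.mem_Iio, ← lift_omega1.{u, v}, Ordinal.lift_lt]; exact hα1
    · have hdnα : dn (Ordinal.lift.{v,u} α) = α := by
        have h1 := hdnspec (Ordinal.lift.{v,u} α)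
          (by rw [← lift_omega1.{u, v}, Ordinal.lift_lt]; exact hα1)
        exact Ordinal.lift_inj.1 h1
      show X' ∩ Set.Iio (Ordinal.lift.{v,u} α) =
        Ordinal.lift.{v,u} '' (D (dn (Ordinal.lift.{v,u} α)))
      rw [hdnα, ← hα2]
      apply Set.eq_of_subset_of_subset
      · rintro x' ⟨hx'X, hx'α⟩
        obtain ⟨x, rfl⟩ := Ordinal.mem_range_lift_of_le (le_of_lt hx'α)
        exact ⟨x, ⟨hx'X, Ordinal.lift_lt.1 hx'α⟩, rfl⟩
      · rintro x' ⟨x, ⟨hxX, hxα⟩, rfl⟩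
        exact ⟨hxX, Ordinal.lift_lt.2 hxα⟩

lemma diamondOn_lift_down.{u, v} (h : DiamondOn.{max u v} (Set.Iio omega1.{max u v})) :
    DiamondOn.{u} (Set.Iio omega1.{u}) := by
  obtain ⟨D', hD1, hD2⟩ := h
  refine ⟨fun o => Ordinal.lift.{v,u} ⁻¹' (D' (Ordinal.lift.{v,u} o)), ?_, ?_⟩
  · intro o ho x hx
    have hlift : Ordinal.lift.{v,u} o ∈ Set.Iio omega1.{max u v} := by
      rw [Set.mem_Iio, ← lift_omega1.{u, v}, Ordinal.lift_lt]; exact ho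
    have := hD1 _ hlift hx
    rw [Set.mem_Iio, Ordinal.lift_lt] at this
    exact this
  · intro X hX C hC
    set X' : Set Ordinal.{max u v} := Ordinal.lift.{v,u} '' X with hX'
    have hX'sub : X' ⊆ Set.Iio omega1.{max u v} := by
      rintro x' ⟨x, hx, rfl⟩
      rw [Set.mem_Iio, ← lift_omega1.{u, v}, Ordinal.lift_lt]
      exact hX hx
    obtain ⟨α', ⟨hα1, hα2⟩, hαC⟩ := hD2 X' hX'sub _ (isClubIn_image_lift hC)
    obtain ⟨α, hαmem, rfl⟩ := hαC
    refine ⟨α, ⟨?_, ?_⟩, hαmem⟩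
    · rw [Set.mem_Iio] at hα1 ⊢
      rwa [← lift_omega1.{u, v}, Ordinal.lift_lt] at hα1
    · apply Set.eq_of_subset_of_subset
      · rintro y ⟨hyX, hyα⟩
        show Ordinal.lift.{v,u} y ∈ D' _
        rw [← hα2]
        exact ⟨⟨y, hyX, rfl⟩, Ordinal.lift_lt.2 hyα⟩
      · rintro y hy
        have : Ordinal.lift.{v,u} y ∈ D' (Ordinal.lift.{v,u} α) := hy
        rw [← hα2] at this
        obtain ⟨⟨x, hxX, hxy⟩, hlt⟩ := this
        have : x = y := Ordinal.lift_inj.1 hxy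
        subst this
        exact ⟨hxX, Ordinal.lift_lt.1 hlt⟩

lemma diamondOn_transfer.{u, v} (h : DiamondOn.{u} (Set.Iio omega1.{u})) :
    DiamondOn.{v} (Set.Iio omega1.{v}) :=
  diamondOn_lift_down.{v, u} (diamondOn_lift_up.{u, v} h)

end UniverseTransfer


section MainDirections

universe uT uO

variable {T : Type uT} [PartialOrder T] [OrderBot T]

lemma diamond_to_diamondTree (hchain : PredsChain T) (ht : T → Ordinal.{uO})
    (hht : IsHeightFun ht) (hΩ : HeightOmega1 ht)
    (hbranch : ∃ B : Set T, IsChain (· ≤ ·) B ∧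
      ∀ o : Ordinal, o < omega1 → ∃ t ∈ B, ht t = o)
    (hdiam : DiamondOn (Set.Iio omega1.{uO})) : DiamondTree T := by
  classical
  obtain ⟨Br, hBrchain, hBr⟩ := hbranch
  set b : Ordinal → T := fun o => if h : o < omega1 then (hBr o h).choose else ⊥ with hb
  have hbspec : ∀ o : Ordinal, o < omega1 → b o ∈ Br ∧ ht (b o) = o := by
    intro o h
    rw [hb]; simp only [h, dif_pos]
    exact (hBr o h).choose_spec
  have hbmono : ∀ {o o' : Ordinal}, o < o' → o' < omega1 → b o < b o' := by
    intro o o' hoo' ho'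
    have h1 := hbspec o (hoo'.trans ho')
    have h2 := hbspec o' ho'
    have hne : b o ≠ b o' := by
      intro hc
      rw [← h1.2, ← h2.2, hc] at hoo'
      exact lt_irrefl _ hoo'
    rcases hBrchain h1.1 h2.1 hne with hle | hle
    · exact hle.lt_of_ne hne
    · exfalso
      have := hht.1 _ _ (hle.lt_of_ne (Ne.symm hne))
      rw [h1.2, h2.2] at this
      exact absurd hoo' (not_lt.2 this.le)
  have hIio : ∀ {o' : Ordinal}, o' < omega1 → Set.Iio (b o') = b '' Set.Iio o' := by
    intro o' ho'
    apply Set.eq_of_subset_of_subset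
    · intro s hs
      have hlt : ht s < o' := by
        have := hht.1 s (b o') hs
        rwa [(hbspec o' ho').2] at this
      refine ⟨ht s, hlt, ?_⟩
      exact (pred_unique hchain hht (hbmono hlt ho') hs
        (by rw [(hbspec _ (hlt.trans ho')).2]))
    · rintro x ⟨o, ho, rfl⟩
      exact hbmono ho ho'
  obtain ⟨D0, hD01, hD02⟩ := hdiam
  set Dt : T → Set T := fun t =>
    if (∃ o, o < omega1 ∧ t = b o) then b '' (D0 (ht t)) else ∅ with hDt
  refine ⟨Dt, ?_, ?_⟩
  · intro t
    rw [hDt]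
    by_cases h : ∃ o, o < omega1 ∧ t = b o
    · simp only [h, if_pos]
      obtain ⟨o, ho, rfl⟩ := h
      rw [(hbspec o ho).2, hIio ho]
      exact Set.image_mono (hD01 o ho)
    · simp only [h, if_neg]
      exact Set.empty_subset _
  · intro X hNS
    obtain ⟨f, hreg, hfib⟩ := hNS
    set Y : Set Ordinal := {o | o < omega1 ∧ b o ∈ X} with hY
    have hYsub : Y ⊆ Set.Iio omega1 := fun o ho => ho.1
    have hstat := hD02 Y hYsub
    set Sset : Set Ordinal := {o ∈ Set.Iio omega1 | Y ∩ Set.Iio o = D0 o} with hSset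
    -- branch nodes at guessing levels are guessed by the tree sequence
    have hG : ∀ o ∈ Sset, X ∩ Set.Iio (b o) = Dt (b o) := by
      rintro o ⟨ho, hYo⟩
      have hcond : ∃ o', o' < omega1 ∧ b o = b o' := ⟨o, ho, rfl⟩
      have hXb : X ∩ Set.Iio (b o) = b '' (Y ∩ Set.Iio o) := by
        rw [hIio ho]
        apply Set.eq_of_subset_of_subset
        · rintro x ⟨hxX, ξ, hξ, rfl⟩
          exact ⟨ξ, ⟨⟨hξ.trans ho, hxX⟩, hξ⟩, rfl⟩
        · rintro x ⟨ξ, ⟨hξY, hξ⟩, rfl⟩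
          exact ⟨hξY.2, ξ, hξ, rfl⟩
      rw [hXb, hYo, hDt]
      simp only [hcond, if_pos]
      rw [(hbspec o ho).2]
    set Z : Ordinal → Set Ordinal := fun β => {o | o ∈ Sset ∧ f (b o) = b β} with hZ
    have hZc : ∀ β, (Z β).Countable := by
      intro β
      obtain ⟨A, hA, hsub⟩ := hfib (b β)
      have : Z β ⊆ ⋃ n, {o | o < omega1 ∧ b o ∈ A n} := by
        rintro o ⟨hoS, hfo⟩
        have hbo : b o ∈ {s | s ∈ {t | X ∩ Set.Iio t = Dt t} ∧ f s = b β} :=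
          ⟨hG o hoS, hfo⟩
        obtain ⟨n, hn⟩ := Set.mem_iUnion.1 (hsub hbo)
        exact Set.mem_iUnion.2 ⟨n, hoS.1, hn⟩
      apply Set.Countable.mono this
      apply Set.countable_iUnion
      intro n
      apply Set.Subsingleton.countable
      intro o ⟨ho, hoA⟩ o' ⟨ho', hoA'⟩
      by_contra hne
      have hbne : b o ≠ b o' := by
        intro hc
        apply hne
        have := (hbspec o ho).2
        rw [hc, (hbspec o' ho').2] at this
        exact this.symm
      rcases lt_or_gt_of_ne hne with hlt | hlt
      · exact hA n hoA hoA' hbne (hbmono hlt ho').le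
      · exact hA n hoA' hoA (Ne.symm hbne) (hbmono hlt ho).le
    set h : Ordinal → Ordinal := fun β => sSup (Z β) + 1 with hh
    have hhlt : ∀ β, β < omega1 → h β < omega1 := by
      intro β _
      exact succ_lt_omega1 (sSup_lt_omega1 (hZc β) (fun z hz => hz.1.1))
    obtain ⟨α, hαS, hαC⟩ := hstat (closurePts h) (isClubIn_closurePts h hhlt)
    have hα1 : α < omega1 := hαC.1
    have hαpos : (0 : Ordinal) < α := hαC.2.1
    have hbG : b α ∈ {t | X ∩ Set.Iio t = Dt t} := hG α hαS
    have hbbot : b α ≠ ⊥ := by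
      intro hc
      have := (hbspec α hα1).2
      rw [hc, ht_bot_eq_zero hht] at this
      exact absurd this.symm (ne_of_gt hαpos)
    have hflt : f (b α) < b α := hreg (b α) hbG hbbot
    have : f (b α) ∈ b '' Set.Iio α := by rw [← hIio hα1]; exact hflt
    obtain ⟨β, hβα, hfb⟩ := this
    have hαZ : α ∈ Z β := ⟨hαS, hfb.symm⟩
    have h1 : α ≤ sSup (Z β) :=
      le_csSup (bddAbove_of_lt_omega1 (fun z hz => hz.1.1)) hαZ
    have h2 : h β < α := hαC.2.2 β hβα
    rw [hh] at h2
    exact absurd (lt_of_le_of_lt (h1.trans (lt_add_one _).le) h2) (lt_irrefl α)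


lemma diamondTree_to_diamond (hchain : PredsChain T) (ht : T → Ordinal.{uO})
    (hht : IsHeightFun ht) (hΩ : HeightOmega1 ht) (hlev : CountableLevels ht)
    (hdt : DiamondTree T) : DiamondOn (Set.Iio omega1.{uO}) := by
  classical
  obtain ⟨Dt, hDt1, hDt2⟩ := hdt
  -- enumerations of the levels
  have hlevne : ∀ o : Ordinal, o < omega1 → {t : T | ht t = o}.Nonempty := by
    intro o ho
    obtain ⟨t, htt⟩ := hΩ.2 o ho
    exact ⟨t, htt⟩
  set g : Ordinal → ℕ → T := fun o =>
    if h : o < omega1 then ((hlev o).exists_eq_range (hlevne o h)).choose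
    else fun _ => ⊥ with hg
  have hgspec : ∀ o : Ordinal, o < omega1 → {t : T | ht t = o} = Set.range (g o) := by
    intro o h
    rw [hg]; simp only [h, dif_pos]
    exact ((hlev o).exists_eq_range (hlevne o h)).choose_spec
  set Dc : ℕ → Ordinal → Set Ordinal := fun n α =>
    {ξ | ξ < α ∧ (Ordinal.omega0 * ξ + (n : Ordinal)) ∈ ht '' (Dt (g α n))} with hDc
  by_contra hnd
  have hfail : ∀ n : ℕ, ∃ X, X ⊆ Set.Iio omega1 ∧ ∃ C, IsClubIn C ∧
      ∀ α ∈ C, ¬(α ∈ Set.Iio omega1 ∧ X ∩ Set.Iio α = Dc n α) := by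
    intro n
    by_contra hcon
    push_neg at hcon
    apply hnd
    refine ⟨Dc n, fun o _ => fun ξ hξ => hξ.1, ?_⟩
    intro X hX C hC
    obtain ⟨α, hαC, hα⟩ := hcon X hX C hC
    exact ⟨α, hα, hαC⟩
  choose Xf hXf Cf hCf hmiss using hfail
  set Xstar : Set Ordinal :=
    ⋃ n : ℕ, (fun ξ => Ordinal.omega0 * ξ + (n : Ordinal)) '' (Xf n) with hXstar
  set Xt : Set T := {t : T | ht t ∈ Xstar} with hXt
  have hG := hDt2 Xt
  set Cmult : Set Ordinal :=
    closurePts (fun ξ => Ordinal.omega0 * ξ + Ordinal.omega0) with hCmult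
  set C' : ℕ → Set Ordinal := fun k => Nat.rec Cmult (fun n _ => Cf n) k with hC'
  have hC'club : ∀ k, IsClubIn (C' k) := by
    intro k
    cases k with
    | zero => exact isClubIn_closurePts _ (fun o ho => omega_mul_add_omega_lt_omega1 ho)
    | succ n => exact hCf n
  have hCbig := isClubIn_iInter hC'club
  have hGhit : ∃ t, (Xt ∩ Set.Iio t = Dt t) ∧ ht t ∈ ⋂ k, C' k := by
    by_contra hno
    push_neg at hno
    apply hG
    apply (inNS_of_levels_notin_club hchain hht hΩ hlev hCbig).mono
    intro t htG
    exact hno t htG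
  obtain ⟨t, htG, htC⟩ := hGhit
  set α := ht t with hα
  have hα1 : α < omega1 := hΩ.1 t
  have hmem : ∀ n : ℕ, α ∈ Cf n := fun n => Set.mem_iInter.1 htC (n + 1)
  have hmul : ∀ ξ < α, Ordinal.omega0 * ξ + Ordinal.omega0 < α :=
    (Set.mem_iInter.1 htC 0).2.2
  obtain ⟨n, hgn⟩ : ∃ n, g α n = t := by
    have : t ∈ Set.range (g α) := by rw [← hgspec α hα1]; rfl
    exact this
  -- the decoded guess at level α
  have hkey : ht '' (Dt t) = Xstar ∩ Set.Iio α := by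
    rw [← htG]
    apply Set.eq_of_subset_of_subset
    · rintro x ⟨s, ⟨hsX, hst⟩, rfl⟩
      exact ⟨hsX, hht.1 s t hst⟩
    · rintro x ⟨hxX, hxα⟩
      obtain ⟨s, hst, hshx⟩ := hht.2 t x hxα
      exact ⟨s, ⟨by rw [hXt]; show ht s ∈ Xstar; rw [hshx]; exact hxX, hst⟩, hshx⟩
  have heq : Xf n ∩ Set.Iio α = Dc n α := by
    apply Set.eq_of_subset_of_subset
    · rintro ξ ⟨hξX, hξα⟩
      refine ⟨hξα, ?_⟩
      rw [hgn, hkey]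
      refine ⟨Set.mem_iUnion.2 ⟨n, ξ, hξX, rfl⟩, ?_⟩
      calc Ordinal.omega0 * ξ + (n : Ordinal)
          < Ordinal.omega0 * ξ + Ordinal.omega0 :=
            add_lt_add_right (Ordinal.nat_lt_omega0 n) _
        _ < α := hmul ξ hξα
    · rintro ξ ⟨hξα, hmemξ⟩
      rw [hgn, hkey] at hmemξ
      obtain ⟨hmemX, -⟩ := hmemξ
      obtain ⟨m, ζ, hζX, hζeq⟩ := by
        simpa only [hXstar, Set.mem_iUnion, Set.mem_image] using hmemX
      obtain ⟨h1, h2⟩ := code_inj hζeq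
      exact ⟨by rw [h1, h2] at hζX; exact hζX, hξα⟩
  exact hmiss n α (hmem n) ⟨hα1, heq⟩


end MainDirections

/-- Let `T` be a tree of height `ω₁` with a cofinal branch (a chain meeting
every level). Then `◊` implies `◊_T`; moreover if `T` is in addition an `ω₁`-tree
(all levels countable), then `◊` and `◊_T` are equivalent. -/
theorem stmt8 {T : Type*} [PartialOrder T] [OrderBot T]
    (hchain : PredsChain T) (ht : T → Ordinal)
    (hht : IsHeightFun ht) (hΩ : HeightOmega1 ht)
    (hbranch : ∃ B : Set T, IsChain (· ≤ ·) B ∧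
      ∀ o : Ordinal, o < omega1 → ∃ t ∈ B, ht t = o) :
    (DiamondOn (Set.Iio omega1) → DiamondTree T) ∧
    (CountableLevels ht → (DiamondOn (Set.Iio omega1) ↔ DiamondTree T)) := by
  refine ⟨fun hd => diamond_to_diamondTree hchain ht hht hΩ hbranch (diamondOn_transfer hd),
    fun hlev => ⟨fun hd => diamond_to_diamondTree hchain ht hht hΩ hbranch (diamondOn_transfer hd),
      fun hdt => diamondOn_transfer (diamondTree_to_diamond hchain ht hht hΩ hlev hdt)⟩⟩
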